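/- With q = (α, 1−α), 0 < α ≤ 1/2, and K the binary mechanism K = (1/(e^ε α + 1 − α)) · [[e^ε α, 1 − α], [α, (e^ε − 1)α + 1 − α]], we have min_i K_{ii} = K_{11} = e^ε α/(e^ε α + 1 − α), and hence sup_{p ∈ Δ({1,2})} D_f(p ‖ pK) = ((1 − α)/(e^ε α + 1 − α)) f(0) + (e^ε α/(e^ε α + 1 − α)) f((e^ε α + 1 − α)/(e^ε α)), matching the lower bound; i.e., K is minimax optimal among ε-LDP mechanisms fixing q. -/

import Mathlib

open Finset

/-- The `f`-divergence between distributions `p` and `r` on `Fin n`. -/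
noncomputable def fDiv {n : ℕ} (f : ℝ → ℝ) (p r : Fin n → ℝ) : ℝ :=
  ∑ x, r x * f (p x / r x)

/-- The output distribution `pK` of the mechanism `K` applied to `p`. -/
def push {n : ℕ} (p : Fin n → ℝ) (K : Matrix (Fin n) (Fin n) ℝ) : Fin n → ℝ :=
  fun j => ∑ i, p i * K i j

/-- Key scalar convexity bound. -/
lemma key_bound (f : ℝ → ℝ) (hconv : ConvexOn ℝ (Set.Ici (0:ℝ)) f)
    (a p r : ℝ) (ha : 0 < a) (hp : 0 ≤ p) (hr : 0 < r) (hpr : p * a ≤ r) :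
    r * f (p / r) ≤ p * a * f (1 / a) + (r - p * a) * f 0 := by
  have hx : (1 : ℝ) / a ∈ Set.Ici (0:ℝ) := by
    have : 0 ≤ (1:ℝ)/a := by positivity
    simpa using this
  have hy : (0 : ℝ) ∈ Set.Ici (0:ℝ) := Set.mem_Ici.2 le_rfl
  have hlam : 0 ≤ p * a / r := by positivity
  have hmu : 0 ≤ 1 - p * a / r := by
    have : p * a / r ≤ 1 := (div_le_one hr).2 hpr
    linarith
  have hsum : p * a / r + (1 - p * a / r) = 1 := by ring
  have h := hconv.2 hx hy hlam hmu hsum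
  have harg : (p * a / r) • ((1:ℝ) / a) + (1 - p * a / r) • (0:ℝ) = p / r := by
    field_simp
    simp only [smul_eq_mul, mul_zero, add_zero]; field_simp
  rw [harg] at h
  have h2 := mul_le_mul_of_nonneg_left h (le_of_lt hr)
  calc r * f (p / r) ≤ r * ((p * a / r) * f (1 / a) + (1 - p * a / r) * f 0) := by
        simpa [smul_eq_mul] using h2
    _ = p * a * f (1 / a) + (r - p * a) * f 0 := by
        field_simp
        try ring

theorem binary_mechanism_optimal (ε α : ℝ) (hε : 0 ≤ ε) (hα : 0 < α) (hα2 : α ≤ 1 / 2)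
    (f : ℝ → ℝ) (hconv : ConvexOn ℝ (Set.Ici (0:ℝ)) f) (hf1 : f 1 = 0)
    (K : Matrix (Fin 2) (Fin 2) ℝ)
    (hK : K = (1 / (Real.exp ε * α + 1 - α)) •
      !![Real.exp ε * α, 1 - α; α, (Real.exp ε - 1) * α + 1 - α]) :
    K 0 0 ≤ K 1 1 ∧
    K 0 0 = Real.exp ε * α / (Real.exp ε * α + 1 - α) ∧
    IsGreatest
      {v : ℝ | ∃ p : Fin 2 → ℝ, (∀ i, 0 ≤ p i) ∧ ∑ i, p i = 1 ∧ v = fDiv f p (push p K)}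
      ((1 - α) / (Real.exp ε * α + 1 - α) * f 0 +
        Real.exp ε * α / (Real.exp ε * α + 1 - α) *
          f ((Real.exp ε * α + 1 - α) / (Real.exp ε * α))) := by
  have hE : 1 ≤ Real.exp ε := Real.one_le_exp hε
  set E := Real.exp ε with hEdef
  have hc : 0 < E * α + 1 - α := by nlinarith
  set c := E * α + 1 - α with hcdef
  have hK00 : K 0 0 = E * α / c := by
    rw [hK]; simp [Matrix.smul_apply]; ring
  have hK01 : K 0 1 = (1 - α) / c := by
    rw [hK]; simp [Matrix.smul_apply]; ring
  have hK10 : K 1 0 = α / c := by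
    rw [hK]; simp [Matrix.smul_apply]; ring
  have hK11 : K 1 1 = ((E - 1) * α + 1 - α) / c := by
    rw [hK]; simp [Matrix.smul_apply]; ring
  have hEα : 0 < E * α := by nlinarith
  have ha : 0 < E * α / c := by positivity
  have hαc : 0 < α / c := by positivity
  have h1αc : 0 < (1 - α) / c := div_pos (by linarith) hc
  have hinv : (1 : ℝ) / (E * α / c) = c / (E * α) := by
    rw [one_div_div]
  refine ⟨?_, hK00, ?_, ?_⟩
  · rw [hK00, hK11, div_le_div_iff₀ hc hc]
    nlinarith
  · -- membership: p = ![1, 0]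
    refine ⟨![1, 0], by intro i; fin_cases i <;> norm_num, by simp [Fin.sum_univ_two], ?_⟩
    have hpush0 : push ![1, 0] K 0 = E * α / c := by
      simp [push, Fin.sum_univ_two, hK00]
    have hpush1 : push ![1, 0] K 1 = (1 - α) / c := by
      simp [push, Fin.sum_univ_two, hK01]
    rw [fDiv, Fin.sum_univ_two, hpush0, hpush1]
    have h1 : (![1, 0] : Fin 2 → ℝ) 0 = 1 := rfl
    have h2 : (![1, 0] : Fin 2 → ℝ) 1 = 0 := rfl
    rw [h1, h2, zero_div, hinv]
    ring
  · -- upper bound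
    rintro v ⟨p, hp0, hpsum, rfl⟩
    rw [Fin.sum_univ_two] at hpsum
    have hp00 := hp0 0
    have hp01 := hp0 1
    have hr0 : push p K 0 = p 0 * (E * α / c) + p 1 * (α / c) := by
      simp [push, Fin.sum_univ_two, hK00, hK10]
    have hr1 : push p K 1 = p 0 * ((1 - α) / c) + p 1 * (((E - 1) * α + 1 - α) / c) := by
      simp [push, Fin.sum_univ_two, hK01, hK11]
    have hppos : (0:ℝ) < p 0 + p 1 := by rw [hpsum]; norm_num
    have hEac : 0 ≤ (E - 1) * α * c :=
      mul_nonneg (mul_nonneg (sub_nonneg.2 hE) hα.le) hc.le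
    have k0 : α / c ≤ E * α / c := by
      rw [div_le_div_iff₀ hc hc]; nlinarith
    have k1 : (1 - α) / c ≤ ((E - 1) * α + 1 - α) / c := by
      rw [div_le_div_iff₀ hc hc]; nlinarith
    have kA : E * α / c ≤ ((E - 1) * α + 1 - α) / c := by
      rw [div_le_div_iff₀ hc hc]
      nlinarith [mul_nonneg (by linarith : (0:ℝ) ≤ 1 - 2 * α) hc.le]
    have hr0pos : 0 < p 0 * (E * α / c) + p 1 * (α / c) := by
      have t1 : p 0 * (α / c) + p 1 * (α / c) = α / c := by
        rw [← add_mul, hpsum, one_mul]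
      have t2 := mul_le_mul_of_nonneg_left k0 hp00
      linarith
    have hr1pos : 0 < p 0 * ((1 - α) / c) + p 1 * (((E - 1) * α + 1 - α) / c) := by
      have t1 : p 0 * ((1 - α) / c) + p 1 * ((1 - α) / c) = (1 - α) / c := by
        rw [← add_mul, hpsum, one_mul]
      have t2 := mul_le_mul_of_nonneg_left k1 hp01
      linarith
    have hpr0 : p 0 * (E * α / c) ≤ p 0 * (E * α / c) + p 1 * (α / c) := by
      linarith [mul_nonneg hp01 hαc.le]
    have hpr1 : p 1 * (E * α / c) ≤ p 0 * ((1 - α) / c) + p 1 * (((E - 1) * α + 1 - α) / c) := by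
      linarith [mul_le_mul_of_nonneg_left kA hp01, mul_nonneg hp00 h1αc.le]
    have hb0 := key_bound f hconv (E * α / c) (p 0) _ ha hp00 hr0pos hpr0
    have hb1 := key_bound f hconv (E * α / c) (p 1) _ ha hp01 hr1pos hpr1
    rw [hinv] at hb0 hb1
    have hrsum : (p 0 * (E * α / c) + p 1 * (α / c))
        + (p 0 * ((1 - α) / c) + p 1 * (((E - 1) * α + 1 - α) / c)) = 1 := by
      have h : (p 0 * (E * α / c) + p 1 * (α / c))
          + (p 0 * ((1 - α) / c) + p 1 * (((E - 1) * α + 1 - α) / c))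
          = (p 0 + p 1) * (c / c) := by
        rw [hcdef]; ring
      rw [h, hpsum, div_self hc.ne', one_mul]
    have e1 : p 0 * (E * α / c) + p 1 * (E * α / c) = E * α / c := by
      calc p 0 * (E * α / c) + p 1 * (E * α / c) = (p 0 + p 1) * (E * α / c) := by ring
        _ = E * α / c := by rw [hpsum, one_mul]
    have h1A : 1 - E * α / c = (1 - α) / c := by
      rw [eq_div_iff hc.ne', sub_mul, div_mul_cancel₀ _ hc.ne', hcdef]
      ring
    rw [fDiv, Fin.sum_univ_two, hr0, hr1]
    calc (p 0 * (E * α / c) + p 1 * (α / c))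
          * f (p 0 / (p 0 * (E * α / c) + p 1 * (α / c)))
        + (p 0 * ((1 - α) / c) + p 1 * (((E - 1) * α + 1 - α) / c))
          * f (p 1 / (p 0 * ((1 - α) / c) + p 1 * (((E - 1) * α + 1 - α) / c)))
        ≤ (p 0 * (E * α / c) * f (c / (E * α))
            + ((p 0 * (E * α / c) + p 1 * (α / c)) - p 0 * (E * α / c)) * f 0)
          + (p 1 * (E * α / c) * f (c / (E * α))
            + ((p 0 * ((1 - α) / c) + p 1 * (((E - 1) * α + 1 - α) / c))
               - p 1 * (E * α / c)) * f 0) := add_le_add hb0 hb1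
      _ = (p 0 * (E * α / c) + p 1 * (E * α / c)) * f (c / (E * α))
          + (((p 0 * (E * α / c) + p 1 * (α / c))
              + (p 0 * ((1 - α) / c) + p 1 * (((E - 1) * α + 1 - α) / c)))
             - (p 0 * (E * α / c) + p 1 * (E * α / c))) * f 0 := by ring
      _ = (E * α / c) * f (c / (E * α)) + (1 - E * α / c) * f 0 := by rw [e1, hrsum]
      _ = (1 - α) / c * f 0 + E * α / c * f (c / (E * α)) := by rw [h1A]; ring
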